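/- Let (G,I,O) be an open graph with I∩O = ∅ and let M'_{G,I,O} be the variable flow matrix: starting from the reduced adjacency matrix over F₂, for each internal vertex v ∈ B = V∖(I∪O) multiply row v by a variable x_v and column v by a variable y_v, and set the (v,v) entry to (1+x_v)(1+y_v). Then there exists a measurement labelling λ such that (G,I,O,λ) has a Pauli flow if and only if there exists a valuation of all the variables x_v, y_v in {0,1} under which M'_{G,I,O} is right-invertible over F₂. -/

import Mathlib

inductive MLabel | X | Y | Z | XY | XZ | YZ
deriving DecidableEq

open Finset
open scoped symmDiff

set_option linter.unusedSectionVars false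

variable {V : Type} [Fintype V] [DecidableEq V]

/-- The odd neighbourhood of a set of vertices. -/
def Odds (G : SimpleGraph V) [DecidableRel G.Adj] (A : Finset V) : Finset V :=
  Finset.univ.filter fun v => Odd (A ∩ G.neighborFinset v).card

/-- Pauli flow conditions (P1)-(P9) for a labelled open graph. -/
structure PauliFlow (G : SimpleGraph V) [DecidableRel G.Adj]
    (I O : Finset V) (lam : V → MLabel) (c : V → Finset V) (prec : V → V → Prop) : Prop where
  irrefl : ∀ u, ¬ prec u u
  trans : ∀ u v w, prec u v → prec v w → prec u w
  csub : ∀ u, u ∉ O → ∀ v ∈ c u, v ∉ I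
  P1 : ∀ u, u ∉ O → ∀ v ∈ c u, v ∉ O → u ≠ v →
      lam v ≠ MLabel.X → lam v ≠ MLabel.Y → prec u v
  P2 : ∀ u, u ∉ O → ∀ v ∈ Odds G (c u), v ∉ O → u ≠ v →
      lam v ≠ MLabel.Y → lam v ≠ MLabel.Z → prec u v
  P3 : ∀ u, u ∉ O → ∀ v, v ∉ O → ¬ prec u v → u ≠ v → lam v = MLabel.Y →
      (v ∈ c u ↔ v ∈ Odds G (c u))
  P4 : ∀ u, u ∉ O → lam u = MLabel.XY → u ∉ c u ∧ u ∈ Odds G (c u)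
  P5 : ∀ u, u ∉ O → lam u = MLabel.XZ → u ∈ c u ∧ u ∈ Odds G (c u)
  P6 : ∀ u, u ∉ O → lam u = MLabel.YZ → u ∈ c u ∧ u ∉ Odds G (c u)
  P7 : ∀ u, u ∉ O → lam u = MLabel.X → u ∈ Odds G (c u)
  P8 : ∀ u, u ∉ O → lam u = MLabel.Z → u ∈ c u
  P9 : ∀ u, u ∉ O → lam u = MLabel.Y → Xor' (u ∈ c u) (u ∈ Odds G (c u))

/-- Focussing conditions (F1)-(F3). -/
def Focussed (G : SimpleGraph V) [DecidableRel G.Adj]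
    (O : Finset V) (lam : V → MLabel) (c : V → Finset V) : Prop :=
  ∀ v, v ∉ O →
    (∀ w, w ∉ O → w ≠ v → w ∈ c v →
      lam w = MLabel.XY ∨ lam w = MLabel.X ∨ lam w = MLabel.Y) ∧
    (∀ w, w ∉ O → w ≠ v → w ∈ Odds G (c v) →
      lam w = MLabel.XZ ∨ lam w = MLabel.YZ ∨ lam w = MLabel.Y ∨ lam w = MLabel.Z) ∧
    (∀ w, w ∉ O → w ≠ v → lam w = MLabel.Y → (w ∈ c v ↔ w ∈ Odds G (c v)))

/-- The reduced adjacency matrix over F₂: rows indexed by non-outputs, columns by non-inputs. -/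
def redAdj (G : SimpleGraph V) [DecidableRel G.Adj] (I O : Finset V) :
    Matrix {v : V // v ∉ O} {v : V // v ∉ I} (ZMod 2) :=
  Matrix.of fun v u => if G.Adj v.val u.val then 1 else 0

/-- The variable flow matrix, evaluated at a {0,1}-valuation `x`, `y` of the row
and column variables of internal vertices: row `v` is multiplied by `x v` and
column `v` by `y v` for internal `v`, and the `(v,v)` entry is set to
`(1 + x v)(1 + y v)`. -/
def varFlowMat (G : SimpleGraph V) [DecidableRel G.Adj] (I O : Finset V)
    (x y : V → ZMod 2) : Matrix {v : V // v ∉ O} {v : V // v ∉ I} (ZMod 2) :=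
  Matrix.of fun v u =>
    if v.val = u.val then
      (if v.val ∉ I ∧ v.val ∉ O then (1 + x v.val) * (1 + y v.val) else 0)
    else
      (if G.Adj v.val u.val then 1 else 0) *
      (if v.val ∉ I ∧ v.val ∉ O then x v.val else 1) *
      (if u.val ∉ I ∧ u.val ∉ O then y u.val else 1)

namespace FlowAux

lemma zmod2_cases (a : ZMod 2) : a = 0 ∨ a = 1 := by revert a; decide

lemma zmod2_one_ne_zero : (1 : ZMod 2) ≠ 0 := by decide

lemma zmod2_two : (1 + 1 : ZMod 2) = 0 := by decide

lemma zmod2_comp : ((1 : ZMod 2) + 0) * (1 + 1) = 0 := by decide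

lemma zmod2_zero_ne_one : ¬ (0 : ZMod 2) = 1 := by decide

lemma natCast_zmod2 (n : ℕ) : ((n : ZMod 2) = 1) ↔ Odd n := by
  rcases Nat.even_or_odd n with h | h
  · obtain ⟨k, hk⟩ := h
    subst hk
    constructor
    · intro hc
      exfalso
      have : ((k + k : ℕ) : ZMod 2) = 0 := by push_cast; ring_nf; rw [show (2 : ZMod 2) = 0 by decide]; ring
      rw [this] at hc; exact zmod2_one_ne_zero hc.symm
    · intro hodd; rw [Nat.odd_iff] at hodd; omega
  · obtain ⟨k, hk⟩ := h
    subst hk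
    constructor
    · intro _; exact ⟨k, rfl⟩
    · intro _
      push_cast
      ring_nf
      rw [show (2 : ZMod 2) = 0 by decide]
      ring

variable {G : SimpleGraph V} [DecidableRel G.Adj]

/-- characteristic function of a finset, valued in `ZMod 2` -/
def chi (S : Finset V) (a : V) : ZMod 2 := if a ∈ S then 1 else 0

lemma chi_eq_one {S : Finset V} {a : V} : chi S a = 1 ↔ a ∈ S := by
  unfold chi; split <;> simp_all

lemma chi_eq_zero {S : Finset V} {a : V} : chi S a = 0 ↔ a ∉ S := by
  unfold chi; split <;> simp_all

lemma chi_symmDiff (A B : Finset V) (a : V) : chi (A ∆ B) a = chi A a + chi B a := by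
  unfold chi
  by_cases hA : a ∈ A <;> by_cases hB : a ∈ B <;>
    simp [Finset.mem_symmDiff, hA, hB] <;> decide

lemma chi_empty (a : V) : chi (∅ : Finset V) a = 0 := by simp [chi]

/-- `ZMod 2`-valued indicator of membership in the odd neighbourhood. -/
def oddv (G : SimpleGraph V) [DecidableRel G.Adj] (S : Finset V) (w : V) : ZMod 2 :=
  ∑ a, (if G.Adj w a then 1 else 0) * chi S a

lemma oddv_eq_one {S : Finset V} {w : V} : oddv G S w = 1 ↔ w ∈ Odds G S := by
  have hsum : oddv G S w = ((S ∩ G.neighborFinset w).card : ZMod 2) := by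
    unfold oddv
    have : ∀ a : V, (if G.Adj w a then (1 : ZMod 2) else 0) * chi S a
        = if a ∈ S ∩ G.neighborFinset w then 1 else 0 := by
      intro a
      by_cases hadj : G.Adj w a <;> by_cases hS : a ∈ S <;>
        simp [chi, hadj, hS, SimpleGraph.mem_neighborFinset]
    rw [Finset.sum_congr rfl fun a _ => this a]
    rw [Finset.sum_boole]
    have huniv : Finset.univ.filter (fun a => a ∈ S ∩ G.neighborFinset w)
        = S ∩ G.neighborFinset w := by ext a; simp
    rw [huniv]
  rw [hsum, natCast_zmod2]
  simp [Odds]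

lemma oddv_eq_zero {S : Finset V} {w : V} : oddv G S w = 0 ↔ w ∉ Odds G S := by
  rcases zmod2_cases (oddv G S w) with h | h <;>
    simp [h, ← oddv_eq_one (G := G) (S := S) (w := w)]

lemma oddv_symmDiff (A B : Finset V) (w : V) :
    oddv G (A ∆ B) w = oddv G A w + oddv G B w := by
  unfold oddv
  rw [← Finset.sum_add_distrib]
  refine Finset.sum_congr rfl fun a _ => ?_
  rw [chi_symmDiff]
  ring

lemma oddv_empty (w : V) : oddv G (∅ : Finset V) w = 0 := by
  unfold oddv; simp [chi_empty]

/-- the defect of a set `S` at a vertex `w`, relative to the label of `w`. -/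
def dvl (G : SimpleGraph V) [DecidableRel G.Adj] (l : MLabel) (S : Finset V) (w : V) : ZMod 2 :=
  match l with
  | MLabel.X => oddv G S w
  | MLabel.Z => chi S w
  | MLabel.Y => chi S w + oddv G S w
  | _ => 0

def dv (G : SimpleGraph V) [DecidableRel G.Adj] (lam : V → MLabel) (S : Finset V) (w : V) :
    ZMod 2 := dvl G (lam w) S w

lemma dvl_symmDiff (l : MLabel) (A B : Finset V) (w : V) :
    dvl G l (A ∆ B) w = dvl G l A w + dvl G l B w := by
  cases l <;> simp [dvl, chi_symmDiff, oddv_symmDiff] <;> ring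

lemma dvl_empty (l : MLabel) (w : V) : dvl G l (∅ : Finset V) w = 0 := by
  cases l <;> simp [dvl, chi_empty, oddv_empty]

lemma dv_symmDiff (lam : V → MLabel) (A B : Finset V) (w : V) :
    dv G lam (A ∆ B) w = dv G lam A w + dv G lam B w := dvl_symmDiff _ _ _ _

end FlowAux

namespace FlowAux

instance : Std.Commutative (α := Finset V) (· ∆ ·) := ⟨symmDiff_comm⟩
instance : Std.Associative (α := Finset V) (· ∆ ·) := ⟨symmDiff_assoc⟩

variable {G : SimpleGraph V} [DecidableRel G.Adj]

/-- symmetric difference of a family of finsets -/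
def sfold {β : Type} (s : Finset β) (f : β → Finset V) : Finset V :=
  s.fold (· ∆ ·) ∅ f

lemma dvl_sfold {β : Type} (l : MLabel) (s : Finset β) (f : β → Finset V) (w : V) :
    dvl G l (sfold s f) w = ∑ b ∈ s, dvl G l (f b) w := by
  have h := Finset.fold_hom (op := (· ∆ · : Finset V → Finset V → Finset V))
    (op' := (· + · : ZMod 2 → ZMod 2 → ZMod 2)) (b := (∅ : Finset V)) (f := f) (s := s)
    (m := fun S => dvl G l S w) (fun x y => dvl_symmDiff l x y w)
  rw [Finset.sum_eq_fold]
  rw [sfold, ← h, dvl_empty]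

lemma mem_sfold {β : Type} [DecidableEq β] {s : Finset β} {f : β → Finset V} {a : V}
    (h : a ∈ sfold s f) : ∃ b ∈ s, a ∈ f b := by
  classical
  induction s using Finset.induction_on with
  | empty => simp [sfold] at h
  | insert x s' hx ih =>
    rw [sfold, Finset.fold_insert hx] at h
    rw [Finset.mem_symmDiff] at h
    rcases h with ⟨h1, _⟩ | ⟨h1, _⟩
    · exact ⟨x, Finset.mem_insert_self _ _, h1⟩
    · obtain ⟨b, hb, hab⟩ := ih h1
      exact ⟨b, Finset.mem_insert_of_mem hb, hab⟩

/-- the set of vertices at which the correction set of `u` has a defect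
(these are the vertices whose corrections must be added to focus `c u`). -/
def badset (G : SimpleGraph V) [DecidableRel G.Adj] (O : Finset V) (lam : V → MLabel)
    (c : V → Finset V) (u : V) : Finset V :=
  if u ∈ O then ∅
  else Finset.univ.filter (fun v => v ∉ O ∧ v ≠ u ∧ dv G lam (c u) v = 1)

/-- focussing recursion: repair the correction set of `u` by adding the (already
repaired) correction sets of all bad vertices. -/
noncomputable def focF (G : SimpleGraph V) [DecidableRel G.Adj] (O : Finset V)
    (lam : V → MLabel) (c : V → Finset V) (prec : V → V → Prop)
    (wf : WellFounded (fun a b => prec b a))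
    (hb : ∀ u v, v ∈ badset G O lam c u → prec u v) : V → Finset V :=
  wf.fix (fun u ih =>
    c u ∆ sfold (badset G O lam c u).attach (fun v => ih v.1 (hb u v.1 v.2)))

lemma focF_eq (O : Finset V) (lam : V → MLabel) (c : V → Finset V) (prec : V → V → Prop)
    (wf : WellFounded (fun a b => prec b a))
    (hb : ∀ u v, v ∈ badset G O lam c u → prec u v) (u : V) :
    focF G O lam c prec wf hb u =
      c u ∆ sfold (badset G O lam c u).attach (fun v => focF G O lam c prec wf hb v.1) :=
  WellFounded.fix_eq _ _ _

end FlowAux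
namespace FlowAux

variable {G : SimpleGraph V} [DecidableRel G.Adj]

/-- A focussed flow in compact "defect" form. -/
structure FF (G : SimpleGraph V) [DecidableRel G.Adj] (I O : Finset V)
    (lam : V → MLabel) (c : V → Finset V) : Prop where
  csub : ∀ u, u ∉ O → ∀ a ∈ c u, a ∉ I
  own : ∀ u, u ∉ O → dv G lam (c u) u = 1
  nd : ∀ u, u ∉ O → ∀ w, w ∉ O → w ≠ u → dv G lam (c u) w = 0

theorem focF_spec {I O : Finset V} {lam : V → MLabel} {c : V → Finset V}
    {prec : V → V → Prop}
    (wf : WellFounded (fun a b => prec b a))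
    (hb : ∀ u v, v ∈ badset G O lam c u → prec u v)
    (hpf : PauliFlow G I O lam c prec)
    (hlab : ∀ v, v ∉ O → lam v = MLabel.X ∨ lam v = MLabel.Y ∨ lam v = MLabel.Z) :
    ∀ u, u ∉ O → (∀ a ∈ focF G O lam c prec wf hb u, a ∉ I) ∧
      (∀ w, w ∉ O → dv G lam (focF G O lam c prec wf hb u) w = if w = u then 1 else 0) := by
  intro u
  induction u using WellFounded.induction wf with
  | _ u ih =>
  intro hu
  have hbad_mem : ∀ v, v ∈ badset G O lam c u ↔ (v ∉ O ∧ v ≠ u ∧ dv G lam (c u) v = 1) := by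
    intro v
    unfold badset
    rw [if_neg hu]
    simp
  constructor
  · -- membership
    intro a ha
    rw [focF_eq, Finset.mem_symmDiff] at ha
    rcases ha with ⟨h1, _⟩ | ⟨h1, _⟩
    · exact hpf.csub u hu a h1
    · obtain ⟨b, hbmem, hab⟩ := mem_sfold h1
      have hbb := b.2
      rw [hbad_mem] at hbb
      exact ((ih b.1 (hb u b.1 b.2) hbb.1).1) a hab
  · -- defect values
    intro w hw
    rw [focF_eq]
    rw [dv_symmDiff]
    have hsf : dv G lam (sfold (badset G O lam c u).attach
        (fun v => focF G O lam c prec wf hb v.1)) w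
        = ∑ b ∈ (badset G O lam c u).attach, dv G lam (focF G O lam c prec wf hb b.1) w :=
      dvl_sfold _ _ _ _
    rw [hsf]
    have hterm : ∀ b ∈ (badset G O lam c u).attach,
        dv G lam (focF G O lam c prec wf hb b.1) w = if w = b.1 then 1 else 0 := by
      intro b _
      have hbb := b.2
      rw [hbad_mem] at hbb
      exact (ih b.1 (hb u b.1 b.2) hbb.1).2 w hw
    rw [Finset.sum_congr rfl hterm]
    have hattach : ∑ b ∈ (badset G O lam c u).attach, (if w = b.1 then (1 : ZMod 2) else 0)
        = ∑ b ∈ badset G O lam c u, (if w = b then (1 : ZMod 2) else 0) :=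
      Finset.sum_attach (badset G O lam c u) (fun b => if w = b then (1 : ZMod 2) else 0)
    rw [hattach, Finset.sum_ite_eq]
    by_cases hwu : w = u
    · subst hwu
      have : w ∉ badset G O lam c w := by
        rw [hbad_mem]; simp
      rw [if_neg this, if_pos rfl, add_zero]
      -- own condition of the original flow
      rcases hlab w hw with hX | hY | hZ
      · have := hpf.P7 w hw hX
        rw [← oddv_eq_one (G := G)] at this
        simp [dv, dvl, hX, this]
      · have := hpf.P9 w hw hY
        rcases this with ⟨h1, h2⟩ | ⟨h1, h2⟩
        · rw [← chi_eq_one] at h1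
          rw [← oddv_eq_zero (G := G)] at h2
          simp [dv, dvl, hY, h1, h2]
        · rw [← oddv_eq_one (G := G)] at h1
          rw [← chi_eq_zero] at h2
          simp [dv, dvl, hY, h1, h2]
      · have := hpf.P8 w hw hZ
        rw [← chi_eq_one] at this
        simp [dv, dvl, hZ, this]
    · rw [if_neg hwu]
      by_cases hd : dv G lam (c u) w = 1
      · have : w ∈ badset G O lam c u := by rw [hbad_mem]; exact ⟨hw, hwu, hd⟩
        rw [if_pos this, hd]
        decide
      · have h0 : dv G lam (c u) w = 0 := by
          rcases zmod2_cases (dv G lam (c u) w) with h | h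
          · exact h
          · exact absurd h hd
        have : w ∉ badset G O lam c u := by
          rw [hbad_mem]
          push_neg
          intro _ _
          rw [h0]; decide
        rw [if_neg this, h0, add_zero]

theorem exists_FF_of_flow {I O : Finset V} {lam : V → MLabel} {c : V → Finset V}
    {prec : V → V → Prop} (hpf : PauliFlow G I O lam c prec)
    (hlab : ∀ v, v ∉ O → lam v = MLabel.X ∨ lam v = MLabel.Y ∨ lam v = MLabel.Z) :
    ∃ c' : V → Finset V, FF G I O lam c' := by
  have wf : WellFounded (fun a b => prec b a) := by
    have h1 : IsTrans V (fun a b => prec b a) := ⟨fun a b c h1 h2 => hpf.trans _ _ _ h2 h1⟩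
    have h2 : IsIrrefl V (fun a b => prec b a) := ⟨fun a => hpf.irrefl a⟩
    exact Finite.wellFounded_of_trans_of_irrefl _
  have hb : ∀ u v, v ∈ badset G O lam c u → prec u v := by
    intro u v hv
    unfold badset at hv
    by_cases hu : u ∈ O
    · rw [if_pos hu] at hv; simp at hv
    · rw [if_neg hu] at hv
      simp only [Finset.mem_filter, Finset.mem_univ, true_and] at hv
      obtain ⟨hvO, hvu, hdv⟩ := hv
      rcases hlab v hvO with hX | hY | hZ
      · rw [dv, hX] at hdv
        simp only [dvl] at hdv
        rw [oddv_eq_one] at hdv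
        exact hpf.P2 u hu v hdv hvO (Ne.symm hvu) (by rw [hX]; decide) (by rw [hX]; decide)
      · by_contra hnp
        have hiff := hpf.P3 u hu v hvO hnp (Ne.symm hvu) hY
        rw [dv, hY] at hdv
        simp only [dvl] at hdv
        rcases zmod2_cases (chi (c u) v) with h1 | h1 <;>
          rcases zmod2_cases (oddv G (c u) v) with h2 | h2
        · rw [h1, h2] at hdv; exact absurd hdv (by decide)
        · rw [chi_eq_zero] at h1
          rw [oddv_eq_one] at h2
          exact h1 (hiff.mpr h2)
        · rw [chi_eq_one] at h1
          rw [oddv_eq_zero] at h2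
          exact h2 (hiff.mp h1)
        · rw [h1, h2] at hdv; exact absurd hdv (by decide)
      · rw [dv, hZ] at hdv
        simp only [dvl] at hdv
        rw [chi_eq_one] at hdv
        exact hpf.P1 u hu v hdv hvO (Ne.symm hvu) (by rw [hZ]; decide) (by rw [hZ]; decide)
  refine ⟨focF G O lam c prec wf hb, ?_, ?_, ?_⟩
  · intro u hu
    exact (focF_spec wf hb hpf hlab u hu).1
  · intro u hu
    have := (focF_spec wf hb hpf hlab u hu).2 u hu
    rw [this, if_pos rfl]
  · intro u hu w hw hwu
    have := (focF_spec wf hb hpf hlab u hu).2 w hw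
    rw [this, if_neg hwu]

end FlowAux
namespace FlowAux

variable {G : SimpleGraph V} [DecidableRel G.Adj]

lemma dv_update_ne {lam : V → MLabel} {L : MLabel} {S : Finset V} {w v : V} (h : w ≠ v) :
    dv G (Function.update lam v L) S w = dv G lam S w := by
  unfold dv
  rw [Function.update_of_ne h]

lemma dv_update_same {lam : V → MLabel} {L : MLabel} {S : Finset V} {v : V} :
    dv G (Function.update lam v L) S v = dvl G L S v := by
  unfold dv
  rw [Function.update_self]

theorem yelim {I O : Finset V} :
    ∀ (n : ℕ) (lam : V → MLabel) (c : V → Finset V), FF G I O lam c →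
    (Finset.univ.filter (fun w => w ∉ O ∧ lam w = MLabel.Y)).card ≤ n →
    ∃ lam' c', FF G I O lam' c' ∧ (∀ w, w ∉ O → lam' w ≠ MLabel.Y) := by
  intro n
  induction n with
  | zero =>
    intro lam c hff hcard
    refine ⟨lam, c, hff, fun w hw => ?_⟩
    intro hY
    have : w ∈ Finset.univ.filter (fun w => w ∉ O ∧ lam w = MLabel.Y) := by
      simp [hw, hY]
    have hpos : 0 < (Finset.univ.filter (fun w => w ∉ O ∧ lam w = MLabel.Y)).card :=
      Finset.card_pos.mpr ⟨w, this⟩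
    omega
  | succ n ihn =>
    intro lam c hff hcard
    by_cases hex : ∃ v, v ∉ O ∧ lam v = MLabel.Y
    swap
    · push_neg at hex
      exact ⟨lam, c, hff, hex⟩
    obtain ⟨v, hvO, hvY⟩ := hex
    have hown := hff.own v hvO
    rw [dv, hvY] at hown
    simp only [dvl] at hown
    have hcard' : ∀ lam' : V → MLabel, lam' v ≠ MLabel.Y → (∀ w, w ≠ v → lam' w = lam w) →
        (Finset.univ.filter (fun w => w ∉ O ∧ lam' w = MLabel.Y)).card ≤ n := by
      intro lam' hne heq
      have hsub : Finset.univ.filter (fun w => w ∉ O ∧ lam' w = MLabel.Y)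
          = (Finset.univ.filter (fun w => w ∉ O ∧ lam w = MLabel.Y)).erase v := by
        ext w
        by_cases hwv : w = v
        · subst hwv
          simp [hne]
        · simp [hwv, heq w hwv]
      have hmem : v ∈ Finset.univ.filter (fun w => w ∉ O ∧ lam w = MLabel.Y) := by
        simp [hvO, hvY]
      rw [hsub, Finset.card_erase_of_mem hmem]
      have hpos : 0 < (Finset.univ.filter (fun w => w ∉ O ∧ lam w = MLabel.Y)).card :=
        Finset.card_pos.mpr ⟨v, hmem⟩
      omega
    by_cases hvc : v ∈ c v
    · -- case A : v ∈ c v, relabel v to Z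
      set lam' := Function.update lam v MLabel.Z with hlam'
      set c' := fun u => if v ∈ c u ∧ u ≠ v then c u ∆ c v else c u with hc'
      have hff' : FF G I O lam' c' := by
        refine ⟨?_, ?_, ?_⟩
        · intro u hu a ha
          rw [hc'] at ha
          simp only at ha
          split at ha
          · rw [Finset.mem_symmDiff] at ha
            rcases ha with ⟨h1, _⟩ | ⟨h1, _⟩
            · exact hff.csub u hu a h1
            · exact hff.csub v hvO a h1
          · exact hff.csub u hu a ha
        · intro u hu
          by_cases huv : u = v
          · subst huv
            have : c' u = c u := by rw [hc']; simp
            rw [this, dv_update_same]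
            simp only [dvl]
            rw [chi_eq_one.mpr hvc]
          · rw [dv_update_ne huv, hc']
            simp only
            split
            · rename_i hcond
              rw [dv_symmDiff, hff.own u hu, hff.nd v hvO u hu huv, add_zero]
            · exact hff.own u hu
        · intro u hu w hw hwu
          by_cases hwv : w = v
          · have huv : u ≠ v := fun h => hwu (by rw [h, hwv])
            rw [hwv]
            rw [dv_update_same]
            simp only [dvl]
            rw [hc']
            simp only
            split
            · rename_i hcond
              rw [chi_symmDiff, chi_eq_one.mpr hcond.1, chi_eq_one.mpr hvc]
              decide
            · rename_i hcond
              rw [chi_eq_zero]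
              intro hmem
              exact hcond ⟨hmem, huv⟩
          · rw [dv_update_ne hwv, hc']
            simp only
            split
            · rename_i hcond
              rw [dv_symmDiff, hff.nd u hu w hw hwu, hff.nd v hvO w hw hwv, add_zero]
            · exact hff.nd u hu w hw hwu
      exact ihn lam' c' hff'
        (hcard' lam' (by rw [hlam', Function.update_self]; decide)
          (fun w hwv => by rw [hlam', Function.update_of_ne hwv]))
    · -- case B : v ∉ c v, relabel v to X
      have hvodd : oddv G (c v) v = 1 := by
        rw [chi_eq_zero.mpr hvc, zero_add] at hown
        exact hown
      set lam' := Function.update lam v MLabel.X with hlam'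
      set c' := fun u => if v ∈ Odds G (c u) ∧ u ≠ v then c u ∆ c v else c u with hc'
      have hff' : FF G I O lam' c' := by
        refine ⟨?_, ?_, ?_⟩
        · intro u hu a ha
          rw [hc'] at ha
          simp only at ha
          split at ha
          · rw [Finset.mem_symmDiff] at ha
            rcases ha with ⟨h1, _⟩ | ⟨h1, _⟩
            · exact hff.csub u hu a h1
            · exact hff.csub v hvO a h1
          · exact hff.csub u hu a ha
        · intro u hu
          by_cases huv : u = v
          · subst huv
            have : c' u = c u := by rw [hc']; simp
            rw [this, dv_update_same]
            simp only [dvl]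
            exact hvodd
          · rw [dv_update_ne huv, hc']
            simp only
            split
            · rw [dv_symmDiff, hff.own u hu, hff.nd v hvO u hu huv, add_zero]
            · exact hff.own u hu
        · intro u hu w hw hwu
          by_cases hwv : w = v
          · have huv : u ≠ v := fun h => hwu (by rw [h, hwv])
            rw [hwv]
            rw [dv_update_same]
            simp only [dvl]
            rw [hc']
            simp only
            split
            · rename_i hcond
              rw [oddv_symmDiff, oddv_eq_one.mpr hcond.1, hvodd]
              decide
            · rename_i hcond
              rw [oddv_eq_zero]
              intro hmem
              exact hcond ⟨hmem, huv⟩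
          · rw [dv_update_ne hwv, hc']
            simp only
            split
            · rw [dv_symmDiff, hff.nd u hu w hw hwu, hff.nd v hvO w hw hwv, add_zero]
            · exact hff.nd u hu w hw hwu
      exact ihn lam' c' hff'
        (hcard' lam' (by rw [hlam', Function.update_self]; decide)
          (fun w hwv => by rw [hlam', Function.update_of_ne hwv]))

end FlowAux
namespace FlowAux

variable {G : SimpleGraph V} [DecidableRel G.Adj]

/-- replace plane labels by Pauli labels -/
def plred : MLabel → MLabel
  | MLabel.XY => MLabel.X
  | MLabel.XZ => MLabel.Z
  | MLabel.YZ => MLabel.Z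
  | l => l

lemma plred_cases (l : MLabel) :
    plred l = MLabel.X ∨ plred l = MLabel.Y ∨ plred l = MLabel.Z := by
  cases l <;> simp [plred]

theorem plred_flow {I O : Finset V} {lam : V → MLabel} {c : V → Finset V}
    {prec : V → V → Prop} (hpf : PauliFlow G I O lam c prec) :
    PauliFlow G I O (fun w => plred (lam w)) c prec := by
  constructor
  · exact hpf.irrefl
  · exact hpf.trans
  · exact hpf.csub
  · -- P1
    intro u hu v hv hvO huv h1 h2
    refine hpf.P1 u hu v hv hvO huv ?_ ?_
    · intro h; exact h1 (by simp only [h]; rfl)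
    · intro h; exact h2 (by simp only [h]; rfl)
  · -- P2
    intro u hu v hv hvO huv h1 h2
    refine hpf.P2 u hu v hv hvO huv ?_ ?_
    · intro h; exact h1 (by simp only [h]; rfl)
    · intro h; exact h2 (by simp only [h]; rfl)
  · -- P3
    intro u hu v hvO hnp huv h
    refine hpf.P3 u hu v hvO hnp huv ?_
    cases hl : lam v <;> rw [hl] at h <;> simp [plred] at h <;> try rfl
  · -- P4
    intro u hu h
    exfalso
    cases hl : lam u <;> rw [hl] at h <;> simp [plred] at h
  · -- P5
    intro u hu h
    exfalso
    cases hl : lam u <;> rw [hl] at h <;> simp [plred] at h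
  · -- P6
    intro u hu h
    exfalso
    cases hl : lam u <;> rw [hl] at h <;> simp [plred] at h
  · -- P7
    intro u hu h
    cases hl : lam u <;> rw [hl] at h <;> simp [plred] at h
    · exact hpf.P7 u hu hl
    · exact (hpf.P4 u hu hl).2
  · -- P8
    intro u hu h
    cases hl : lam u <;> rw [hl] at h <;> simp [plred] at h
    · exact hpf.P8 u hu hl
    · exact (hpf.P5 u hu hl).1
    · exact (hpf.P6 u hu hl).1
  · -- P9
    intro u hu h
    cases hl : lam u <;> rw [hl] at h <;> simp [plred] at h
    exact hpf.P9 u hu hl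

lemma FF_labels {I O : Finset V} {lam : V → MLabel} {c : V → Finset V}
    (hff : FF G I O lam c) (hnoY : ∀ w, w ∉ O → lam w ≠ MLabel.Y) :
    ∀ w, w ∉ O → lam w = MLabel.X ∨ lam w = MLabel.Z := by
  intro w hw
  have h := hff.own w hw
  rw [dv] at h
  cases hl : lam w <;> rw [hl] at h <;> simp only [dvl] at h
  · exact Or.inl rfl
  · exact absurd hl (hnoY w hw)
  · exact Or.inr rfl
  · exact absurd h (by decide)
  · exact absurd h (by decide)
  · exact absurd h (by decide)

lemma sum_nonI {I : Finset V} (f : V → ZMod 2) (hf : ∀ a ∈ I, f a = 0) :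
    ∑ v : {a : V // a ∉ I}, f v.1 = ∑ a, f a := by
  classical
  rw [← Finset.sum_filter_add_sum_filter_not Finset.univ (fun a => a ∉ I) f]
  have h2 : ∑ a ∈ Finset.univ.filter (fun a => ¬ a ∉ I), f a = 0 :=
    Finset.sum_eq_zero (fun a ha => by
      simp only [Finset.mem_filter, not_not] at ha
      exact hf a ha.2)
  rw [h2, add_zero]
  exact (Finset.sum_subtype _ (by simp) f).symm

end FlowAux
namespace FlowAux

variable {G : SimpleGraph V} [DecidableRel G.Adj]

theorem matrix_of_FF {I O : Finset V} {lam : V → MLabel} {c : V → Finset V}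
    (hff : FF G I O lam c)
    (hXZ : ∀ w, w ∉ O → lam w = MLabel.X ∨ lam w = MLabel.Z) :
    ∃ (x y : V → ZMod 2) (N : Matrix {v : V // v ∉ I} {v : V // v ∉ O} (ZMod 2)),
      varFlowMat G I O x y * N = 1 := by
  classical
  set x : V → ZMod 2 := fun a => if lam a = MLabel.X then 1 else 0 with hx
  -- basic facts
  have hZnotI : ∀ a, a ∉ O → lam a = MLabel.Z → a ∉ I := by
    intro a ha hZ
    have h := hff.own a ha
    rw [dv, hZ] at h
    simp only [dvl] at h
    exact hff.csub a ha a (chi_eq_one.mp h)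
  have hF1 : ∀ u, u ∉ O → ∀ a, a ∉ O → a ≠ u → lam a = MLabel.Z → a ∉ c u := by
    intro u hu a ha hau hZ
    have h := hff.nd u hu a ha hau
    rw [dv, hZ] at h
    simp only [dvl] at h
    exact chi_eq_zero.mp h
  have hF2 : ∀ u, u ∉ O → ∀ a, a ∉ O → a ≠ u → lam a = MLabel.X → oddv G (c u) a = 0 := by
    intro u hu a ha hau hX
    have h := hff.nd u hu a ha hau
    rw [dv, hX] at h
    simpa only [dvl] using h
  have hownX : ∀ u, u ∉ O → lam u = MLabel.X → oddv G (c u) u = 1 := by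
    intro u hu hX
    have h := hff.own u hu
    rw [dv, hX] at h
    simpa only [dvl] using h
  have hownZ : ∀ u, u ∉ O → lam u = MLabel.Z → chi (c u) u = 1 := by
    intro u hu hZ
    have h := hff.own u hu
    rw [dv, hZ] at h
    simpa only [dvl] using h
  refine ⟨x, x, Matrix.of (fun v u =>
    if lam u.1 = MLabel.Z then (if v.1 = u.1 then 1 else 0) else chi (c u.1) v.1), ?_⟩
  ext w u
  rw [Matrix.mul_apply, Matrix.one_apply]
  rcases hXZ u.1 u.2 with hu | hu
  · -- column of an X-labelled vertex
    have hNu : ∀ v : {a : V // a ∉ I},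
        (Matrix.of (fun v u => if lam u.1 = MLabel.Z then (if v.1 = u.1 then (1 : ZMod 2) else 0)
          else chi (c u.1) v.1)) v u = chi (c u.1) v.1 := by
      intro v
      simp only [Matrix.of_apply]
      rw [if_neg (by rw [hu]; decide)]
    simp only [hNu]
    rcases hXZ w.1 w.2 with hw | hw
    · -- X-labelled row
      have hxw : x w.1 = 1 := by rw [hx]; simp [hw]
      have hterm : ∀ v : {a : V // a ∉ I},
          varFlowMat G I O x x w v * chi (c u.1) v.1
            = (if G.Adj w.1 v.1 then 1 else 0) * chi (c u.1) v.1 := by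
        intro v
        by_cases hvw : w.1 = v.1
        · rw [varFlowMat, Matrix.of_apply, if_pos hvw]
          have hadj : ¬ G.Adj w.1 v.1 := by rw [← hvw]; exact G.irrefl
          rw [if_neg hadj]
          split
          · rw [hxw]
            ring_nf
            rw [show (4 : ZMod 2) = 0 from by decide]
            ring
          · ring
        · rw [varFlowMat, Matrix.of_apply, if_neg hvw]
          have haw : (if w.1 ∉ I ∧ w.1 ∉ O then x w.1 else 1) = 1 := by
            split
            · exact hxw
            · rfl
          rw [haw, mul_one]
          by_cases hvint : v.1 ∉ I ∧ v.1 ∉ O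
          · rcases hXZ v.1 hvint.2 with hv | hv
            · have : x v.1 = 1 := by rw [hx]; simp [hv]
              rw [if_pos hvint, this, mul_one]
            · -- Z-labelled column vertex cannot lie in c u
              have hvu : v.1 ≠ u.1 := by
                intro h
                rw [h, hu] at hv
                exact absurd hv (by decide)
              have : chi (c u.1) v.1 = 0 :=
                chi_eq_zero.mpr (hF1 u.1 u.2 v.1 hvint.2 hvu hv)
              rw [this]
              ring
          · rw [if_neg hvint, mul_one]
      rw [Finset.sum_congr rfl (fun v _ => hterm v)]
      have hsum : ∑ v : {a : V // a ∉ I},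
          (if G.Adj w.1 v.1 then (1 : ZMod 2) else 0) * chi (c u.1) v.1
            = oddv G (c u.1) w.1 := by
        rw [oddv]
        exact sum_nonI (fun a => (if G.Adj w.1 a then (1 : ZMod 2) else 0) * chi (c u.1) a)
          (fun a ha => by
            show (if G.Adj w.1 a then (1 : ZMod 2) else 0) * chi (c u.1) a = 0
            rw [chi_eq_zero.mpr (fun hmem => hff.csub u.1 u.2 a hmem ha)]
            ring)
      rw [hsum]
      by_cases hwu : w = u
      · rw [if_pos hwu, hwu]
        exact hownX u.1 u.2 hu
      · rw [if_neg hwu]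
        refine hF2 u.1 u.2 w.1 w.2 (fun h => hwu (Subtype.ext h)) hw
    · -- Z-labelled row : all terms vanish
      have hwu : w ≠ u := by
        intro h
        rw [h, hu] at hw
        exact absurd hw (by decide)
      rw [if_neg hwu]
      refine Finset.sum_eq_zero (fun v _ => ?_)
      by_cases hvw : w.1 = v.1
      · rw [varFlowMat, Matrix.of_apply, if_pos hvw]
        have hwI : w.1 ∉ I := by rw [hvw]; exact v.2
        rw [if_pos (show w.1 ∉ I ∧ w.1 ∉ O from ⟨hwI, w.2⟩)]
        have hxw : x w.1 = 0 := by rw [hx]; simp [hw]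
        have hwnc : chi (c u.1) w.1 = 0 := by
          refine chi_eq_zero.mpr (hF1 u.1 u.2 w.1 w.2 ?_ hw)
          intro h
          rw [h, hu] at hw
          exact absurd hw (by decide)
        rw [← hvw, hwnc, hxw]
        ring
      · rw [varFlowMat, Matrix.of_apply, if_neg hvw]
        have hwI : w.1 ∉ I := hZnotI w.1 w.2 hw
        have hxw : x w.1 = 0 := by rw [hx]; simp [hw]
        have hint : (if w.1 ∉ I ∧ w.1 ∉ O then x w.1 else (1 : ZMod 2)) = 0 := by
          rw [if_pos (show w.1 ∉ I ∧ w.1 ∉ O from ⟨hwI, w.2⟩)]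
          exact hxw
        rw [hint]
        ring
  · -- column of a Z-labelled vertex
    have huI : u.1 ∉ I := hZnotI u.1 u.2 hu
    have hNu : ∀ v : {a : V // a ∉ I},
        (Matrix.of (fun v u => if lam u.1 = MLabel.Z then (if v.1 = u.1 then (1 : ZMod 2) else 0)
          else chi (c u.1) v.1)) v u = (if v.1 = u.1 then 1 else 0) := by
      intro v
      simp only [Matrix.of_apply]
      rw [if_pos hu]
    simp only [hNu]
    rw [Finset.sum_eq_single (⟨u.1, huI⟩ : {a : V // a ∉ I})]
    · rw [if_pos rfl, mul_one]
      rw [varFlowMat, Matrix.of_apply]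
      have hxu : x u.1 = 0 := by rw [hx]; simp [hu]
      by_cases hwu : w.1 = u.1
      · rw [if_pos hwu]
        have hwI : w.1 ∉ I := by rw [hwu]; exact huI
        rw [if_pos (show w.1 ∉ I ∧ w.1 ∉ O from ⟨hwI, w.2⟩)]
        have hxw : x w.1 = 0 := by rw [hwu]; exact hxu
        rw [hxw, if_pos (Subtype.ext hwu)]
        decide
      · rw [if_neg hwu]
        have hbu : (if u.1 ∉ I ∧ u.1 ∉ O then x u.1 else (1 : ZMod 2)) = 0 := by
          rw [if_pos (show u.1 ∉ I ∧ u.1 ∉ O from ⟨huI, u.2⟩)]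
          exact hxu
        rw [hbu, if_neg (fun h => hwu (congrArg Subtype.val h))]
        ring
    · intro b _ hb
      have : b.1 ≠ u.1 := fun h => hb (Subtype.ext h)
      rw [if_neg this]
      ring
    · intro h
      exact absurd (Finset.mem_univ _) h

end FlowAux
namespace FlowAux

open Matrix in
theorem pure_valuation_aux : True := trivial

variable {G : SimpleGraph V} [DecidableRel G.Adj]

open Matrix in
theorem pure_valuation {I O : Finset V} {x y : V → ZMod 2}
    {N : Matrix {v : V // v ∉ I} {v : V // v ∉ O} (ZMod 2)}
    (h : varFlowMat G I O x y * N = 1) :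
    ∃ N₂ : Matrix {v : V // v ∉ I} {v : V // v ∉ O} (ZMod 2),
      varFlowMat G I O x x * N₂ = 1 := by
  classical
  haveI : Fact (Nat.Prime 2) := ⟨Nat.prime_two⟩
  have hent : ∀ w u : {v : V // v ∉ O},
      ∑ v : {v : V // v ∉ I}, varFlowMat G I O x y w v * N v u = if w = u then 1 else 0 := by
    intro w u
    have := congrFun (congrFun h w) u
    rwa [Matrix.mul_apply, Matrix.one_apply] at this
  -- a (0,1)-valuated internal vertex would make a zero row
  have h01 : ∀ a, a ∉ I → a ∉ O → x a = 0 → y a = 0 := by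
    intro a haI haO hx0
    rcases zmod2_cases (y a) with h0 | h1
    · exact h0
    exfalso
    have hzero : ∀ v : {v : V // v ∉ I}, varFlowMat G I O x y ⟨a, haO⟩ v = 0 := by
      intro v
      rw [varFlowMat, Matrix.of_apply]
      by_cases hav : a = v.1
      · rw [if_pos hav, if_pos (show a ∉ I ∧ a ∉ O from ⟨haI, haO⟩), hx0, h1]
        exact zmod2_comp
      · rw [if_neg hav]
        have : (if a ∉ I ∧ a ∉ O then x a else 1) = 0 := by
          rw [if_pos (show a ∉ I ∧ a ∉ O from ⟨haI, haO⟩)]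
          exact hx0
        rw [this]
        ring
    have := hent ⟨a, haO⟩ ⟨a, haO⟩
    rw [if_pos rfl] at this
    rw [Finset.sum_eq_zero (fun v _ => by rw [hzero v]; ring)] at this
    exact absurd this zmod2_zero_ne_one
  -- columns of the mixed matrix : either equal to pure column, or zero
  have hcol : ∀ v : {v : V // v ∉ I},
      (∀ w, varFlowMat G I O x y w v = varFlowMat G I O x x w v) ∨
      (∀ w : {v : V // v ∉ O}, varFlowMat G I O x y w v = 0) := by
    intro v
    by_cases hvint : v.1 ∉ I ∧ v.1 ∉ O
    · have hyx : y v.1 = x v.1 → (∀ w, varFlowMat G I O x y w v = varFlowMat G I O x x w v) := by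
        intro hequal w
        rw [varFlowMat, varFlowMat, Matrix.of_apply, Matrix.of_apply]
        by_cases hwv : w.1 = v.1
        · rw [if_pos hwv, if_pos hwv]
          have : y w.1 = x w.1 := by rw [hwv]; exact hequal
          rw [this]
        · rw [if_neg hwv, if_neg hwv, if_pos hvint, if_pos hvint, hequal]
      rcases zmod2_cases (x v.1) with hx0 | hx1
      · exact Or.inl (hyx (by rw [h01 v.1 hvint.1 hvint.2 hx0, hx0]))
      · rcases zmod2_cases (y v.1) with hy0 | hy1
        · -- x = 1, y = 0 : zero column
          refine Or.inr (fun w => ?_)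
          rw [varFlowMat, Matrix.of_apply]
          by_cases hwv : w.1 = v.1
          · rw [if_pos hwv]
            have hwint : w.1 ∉ I ∧ w.1 ∉ O := by rw [hwv]; exact hvint
            rw [if_pos hwint]
            have : x w.1 = 1 := by rw [hwv]; exact hx1
            rw [this, zmod2_two]
            ring
          · rw [if_neg hwv, if_pos hvint, hy0]
            ring
        · exact Or.inl (hyx (by rw [hy1, hx1]))
    · refine Or.inl (fun w => ?_)
      rw [varFlowMat, varFlowMat, Matrix.of_apply, Matrix.of_apply]
      by_cases hwv : w.1 = v.1
      · rw [if_pos hwv, if_pos hwv]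
        have : ¬ (w.1 ∉ I ∧ w.1 ∉ O) := by rw [hwv]; exact hvint
        rw [if_neg this, if_neg this]
      · rw [if_neg hwv, if_neg hwv, if_neg hvint, if_neg hvint]
  -- rows of the pure matrix are linearly independent
  have hker : ∀ g : {v : V // v ∉ O} → ZMod 2,
      Matrix.vecMul g (varFlowMat G I O x x) = 0 → g = 0 := by
    intro g hg
    have hM1 : Matrix.vecMul g (varFlowMat G I O x y) = 0 := by
      funext v
      rcases hcol v with hc | hc
      · have h2 : Matrix.vecMul g (varFlowMat G I O x x) v = 0 := by rw [hg]; rfl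
        simp only [Pi.zero_apply]
        rw [Matrix.vecMul, dotProduct] at h2 ⊢
        rw [← h2]
        exact Finset.sum_congr rfl (fun w _ => by rw [hc w])
      · simp only [Pi.zero_apply]
        rw [Matrix.vecMul, dotProduct]
        exact Finset.sum_eq_zero (fun w _ => by rw [hc w]; ring)
    have h2 : Matrix.vecMul (Matrix.vecMul g (varFlowMat G I O x y)) N
        = Matrix.vecMul g ((varFlowMat G I O x y) * N) := Matrix.vecMul_vecMul _ _ _
    rw [hM1, h, Matrix.zero_vecMul, Matrix.vecMul_one] at h2
    exact h2.symm
  -- produce a right inverse from surjectivity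
  set M₂ := varFlowMat G I O x x with hM₂
  have hinj : LinearMap.ker (Matrix.toLin' M₂ᵀ) = ⊥ := by
    rw [LinearMap.ker_eq_bot']
    intro g hg
    refine hker g ?_
    have : M₂ᵀ.mulVec g = 0 := by rwa [Matrix.toLin'_apply] at hg
    rwa [Matrix.mulVec_transpose] at this
  obtain ⟨L, hL⟩ := LinearMap.exists_leftInverse_of_injective _ hinj
  refine ⟨(LinearMap.toMatrix' L)ᵀ, ?_⟩
  have h3 : LinearMap.toMatrix' (L.comp (Matrix.toLin' M₂ᵀ)) = (1 : Matrix _ _ (ZMod 2)) := by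
    rw [hL, LinearMap.toMatrix'_id]
  rw [LinearMap.toMatrix'_comp, LinearMap.toMatrix'_toLin'] at h3
  have h4 := congrArg Matrix.transpose h3
  rw [Matrix.transpose_mul, Matrix.transpose_transpose, Matrix.transpose_one] at h4
  exact h4

end FlowAux
namespace FlowAux

variable {G : SimpleGraph V} [DecidableRel G.Adj]

theorem flow_of_matrix {I O : Finset V} {x : V → ZMod 2}
    {N : Matrix {v : V // v ∉ I} {v : V // v ∉ O} (ZMod 2)}
    (h : varFlowMat G I O x x * N = 1) :
    ∃ lam : V → MLabel,
      (∀ v ∈ I, lam v = MLabel.X ∨ lam v = MLabel.XY ∨ lam v = MLabel.Y) ∧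
      ∃ (c : V → Finset V) (prec : V → V → Prop), PauliFlow G I O lam c prec := by
  classical
  have hent : ∀ w u : {v : V // v ∉ O},
      ∑ v : {v : V // v ∉ I}, varFlowMat G I O x x w v * N v u = if w = u then 1 else 0 := by
    intro w u
    have := congrFun (congrFun h w) u
    rwa [Matrix.mul_apply, Matrix.one_apply] at this
  set lam : V → MLabel :=
    fun a => if a ∉ I ∧ a ∉ O ∧ x a = 0 then MLabel.Z else MLabel.X with hlam
  set c : V → Finset V := fun u =>
    if hu : u ∈ O then ∅
    else Finset.univ.filter (fun a => ∃ ha : a ∉ I, N ⟨a, ha⟩ ⟨u, hu⟩ = 1) with hc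
  set prec : V → V → Prop :=
    fun a b => (a ∉ I ∧ a ∉ O ∧ x a = 0) ∧ ¬ (b ∉ I ∧ b ∉ O ∧ x b = 0) with hprec
  have hmemc : ∀ (u : {v : V // v ∉ O}) (a : V),
      a ∈ c u.1 ↔ ∃ ha : a ∉ I, N ⟨a, ha⟩ u = 1 := by
    intro u a
    rw [hc]
    simp only
    rw [dif_neg u.2, Finset.mem_filter]
    simp only [Finset.mem_univ, true_and]
  have hchi : ∀ (u : {v : V // v ∉ O}) (a : V) (ha : a ∉ I),
      chi (c u.1) a = N ⟨a, ha⟩ u := by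
    intro u a ha
    rcases zmod2_cases (N ⟨a, ha⟩ u) with h0 | h1
    · rw [h0, chi_eq_zero, hmemc]
      rintro ⟨ha', hN⟩
      rw [hN] at h0
      exact zmod2_one_ne_zero h0
    · rw [h1, chi_eq_one, hmemc]
      exact ⟨ha, h1⟩
  have hchiI : ∀ (u : {v : V // v ∉ O}) (a : V), a ∈ I → chi (c u.1) a = 0 := by
    intro u a ha
    rw [chi_eq_zero, hmemc]
    rintro ⟨ha', _⟩
    exact ha' ha
  -- E1 : membership of "Z-ish" vertices in correction sets
  have hE1 : ∀ (u : {v : V // v ∉ O}) (a : V), a ∉ I → a ∉ O → x a = 0 →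
      chi (c u.1) a = if a = u.1 then 1 else 0 := by
    intro u a haI haO hx0
    have hrow := hent ⟨a, haO⟩ u
    rw [Finset.sum_eq_single (⟨a, haI⟩ : {v : V // v ∉ I})] at hrow
    · rw [varFlowMat, Matrix.of_apply, if_pos rfl,
        if_pos (show a ∉ I ∧ a ∉ O from ⟨haI, haO⟩), hx0] at hrow
      have : ((1 : ZMod 2) + 0) * (1 + 0) = 1 := by decide
      rw [this, one_mul] at hrow
      rw [hchi u a haI, hrow]
      by_cases hau : a = u.1
      · rw [if_pos hau, if_pos (Subtype.ext hau)]
      · rw [if_neg hau, if_neg (fun hh => hau (congrArg Subtype.val hh))]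
    · intro b _ hb
      have hba : b.1 ≠ a := fun hh => hb (Subtype.ext hh)
      rw [varFlowMat, Matrix.of_apply, if_neg (fun hh => hba hh.symm)]
      have : (if a ∉ I ∧ a ∉ O then x a else 1) = 0 := by
        rw [if_pos (show a ∉ I ∧ a ∉ O from ⟨haI, haO⟩)]
        exact hx0
      rw [this]
      ring
    · intro habs
      exact absurd (Finset.mem_univ _) habs
  -- the filtered correction set, dropping Z-ish vertices
  set cf : {v : V // v ∉ O} → Finset V :=
    fun u => (c u.1).filter (fun b => ¬ (b ∉ I ∧ b ∉ O ∧ x b = 0)) with hcf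
  -- E2 : odd neighbourhoods
  have hE2 : ∀ (u : {v : V // v ∉ O}) (a : V), a ∉ O → (a ∈ I ∨ x a = 1) →
      oddv G (cf u) a = if a = u.1 then 1 else 0 := by
    intro u a haO hcase
    have hrow := hent ⟨a, haO⟩ u
    have hterm : ∀ v : {v : V // v ∉ I},
        varFlowMat G I O x x ⟨a, haO⟩ v * N v u
          = (if G.Adj a v.1 then 1 else 0) * chi (cf u) v.1 := by
      intro v
      have hchiv : chi (cf u) v.1
          = (if v.1 ∉ I ∧ v.1 ∉ O then x v.1 else 1) * chi (c u.1) v.1 := by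
        by_cases hvint : v.1 ∉ I ∧ v.1 ∉ O
        · rcases zmod2_cases (x v.1) with hv0 | hv1
          · rw [if_pos hvint, hv0, zero_mul, chi_eq_zero, hcf]
            simp only [Finset.mem_filter]
            rintro ⟨-, hcontra⟩
            exact hcontra ⟨hvint.1, hvint.2, hv0⟩
          · rw [if_pos hvint, hv1, one_mul, hcf]
            simp only
            unfold chi
            by_cases hmem : v.1 ∈ c u.1
            · rw [if_pos hmem, if_pos]
              rw [Finset.mem_filter]
              refine ⟨hmem, ?_⟩
              intro hcontra
              rw [hcontra.2.2] at hv1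
              exact zmod2_one_ne_zero hv1.symm
            · rw [if_neg hmem, if_neg]
              rw [Finset.mem_filter]
              intro hcontra
              exact hmem hcontra.1
        · rw [if_neg hvint, one_mul, hcf]
          simp only
          unfold chi
          by_cases hmem : v.1 ∈ c u.1
          · rw [if_pos hmem, if_pos]
            rw [Finset.mem_filter]
            exact ⟨hmem, fun hcontra => hvint ⟨hcontra.1, hcontra.2.1⟩⟩
          · rw [if_neg hmem, if_neg]
            rw [Finset.mem_filter]
            intro hcontra
            exact hmem hcontra.1
      rw [hchiv, ← hchi u v.1 v.2]
      have hrew : varFlowMat G I O x x ⟨a, haO⟩ v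
          = (if a = v.1 then (if a ∉ I ∧ a ∉ O then (1 + x a) * (1 + x a) else 0)
            else (if G.Adj a v.1 then 1 else 0) * (if a ∉ I ∧ a ∉ O then x a else 1) *
              (if v.1 ∉ I ∧ v.1 ∉ O then x v.1 else 1)) := rfl
      rw [hrew]
      by_cases hav : a = v.1
      · rw [if_pos hav]
        have hadj : ¬ G.Adj a v.1 := by rw [← hav]; exact G.irrefl
        rw [if_neg hadj]
        rcases hcase with haI | hx1
        · exfalso
          rw [hav] at haI
          exact v.2 haI
        · have haI : a ∉ I := by rw [hav]; exact v.2
          rw [if_pos (show a ∉ I ∧ a ∉ O from ⟨haI, haO⟩), hx1,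
            show ((1 : ZMod 2) + 1) * (1 + 1) = 0 from by decide]
          ring
      · rw [if_neg hav]
        have hfa : (if a ∉ I ∧ a ∉ O then x a else 1) = 1 := by
          rcases hcase with haI | hx1
          · rw [if_neg (fun hh => hh.1 haI)]
          · split
            · exact hx1
            · rfl
        rw [hfa, mul_one]
        ring
    rw [Finset.sum_congr rfl (fun v _ => hterm v)] at hrow
    have hsum : ∑ v : {v : V // v ∉ I},
        (if G.Adj a v.1 then (1 : ZMod 2) else 0) * chi (cf u) v.1 = oddv G (cf u) a := by
      rw [oddv]
      refine sum_nonI (fun b => (if G.Adj a b then (1 : ZMod 2) else 0) * chi (cf u) b)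
        (fun b hb => ?_)
      show (if G.Adj a b then (1 : ZMod 2) else 0) * chi (cf u) b = 0
      have : chi (cf u) b = 0 := by
        rw [chi_eq_zero, hcf]
        simp only [Finset.mem_filter]
        rintro ⟨hmem, _⟩
        rw [hmemc] at hmem
        obtain ⟨hb', _⟩ := hmem
        exact hb' hb
      rw [this]
      ring
    rw [hsum] at hrow
    rw [hrow]
    by_cases hau : a = u.1
    · rw [if_pos hau, if_pos (Subtype.ext hau)]
    · rw [if_neg hau, if_neg (fun hh => hau (congrArg Subtype.val hh))]
  -- if u is not Z-ish then cf u = c u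
  have hcfeq : ∀ u : {v : V // v ∉ O}, ¬ (u.1 ∉ I ∧ u.1 ∉ O ∧ x u.1 = 0) → cf u = c u.1 := by
    intro u hu
    rw [hcf]
    simp only
    refine Finset.filter_true_of_mem (fun b hb => ?_)
    intro hcontra
    have := hE1 u b hcontra.1 hcontra.2.1 hcontra.2.2
    rw [chi_eq_one.mpr hb] at this
    by_cases hbu : b = u.1
    · rw [hbu] at hcontra
      exact hu hcontra
    · rw [if_neg hbu] at this
      exact zmod2_one_ne_zero this
  -- labels of inputs
  refine ⟨lam, ?_, c, prec, ?_⟩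
  · intro v hv
    left
    rw [hlam]
    simp only
    rw [if_neg (fun hcontra => hcontra.1 hv)]
  have hlamZ : ∀ a, lam a = MLabel.Z ↔ (a ∉ I ∧ a ∉ O ∧ x a = 0) := by
    intro a
    rw [hlam]
    simp only
    constructor
    · intro hh
      by_contra hcontra
      rw [if_neg hcontra] at hh
      exact absurd hh (by decide)
    · intro hh
      rw [if_pos hh]
  have hlamX : ∀ a, lam a = MLabel.X ↔ ¬ (a ∉ I ∧ a ∉ O ∧ x a = 0) := by
    intro a
    rw [hlam]
    simp only
    constructor
    · intro hh
      intro hcontra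
      rw [if_pos hcontra] at hh
      exact absurd hh (by decide)
    · intro hh
      rw [if_neg hh]
  have hlamnotY : ∀ a, lam a ≠ MLabel.Y := by
    intro a
    rw [hlam]
    simp only
    split
    · decide
    · decide
  have hlamnotP : ∀ a, lam a ≠ MLabel.XY ∧ lam a ≠ MLabel.XZ ∧ lam a ≠ MLabel.YZ := by
    intro a
    rw [hlam]
    simp only
    split
    · exact ⟨by decide, by decide, by decide⟩
    · exact ⟨by decide, by decide, by decide⟩
  constructor
  · -- irrefl
    intro u hcontra
    exact hcontra.2 hcontra.1
  · -- trans
    intro u v w h1 h2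
    exact absurd h2.1 h1.2
  · -- csub
    intro u hu a ha
    rw [hmemc ⟨u, hu⟩ a] at ha
    obtain ⟨ha', _⟩ := ha
    exact ha'
  · -- P1
    intro u hu v hv hvO huv h1 h2
    exfalso
    have hvZ : lam v = MLabel.Z := by
      cases hl : lam v
      · exact absurd hl h1
      · exact absurd hl (hlamnotY v)
      · rfl
      · exact absurd hl (hlamnotP v).1
      · exact absurd hl (hlamnotP v).2.1
      · exact absurd hl (hlamnotP v).2.2
    rw [hlamZ] at hvZ
    have := hE1 ⟨u, hu⟩ v hvZ.1 hvZ.2.1 hvZ.2.2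
    rw [chi_eq_one.mpr hv, if_neg (fun hh => huv hh.symm)] at this
    exact zmod2_one_ne_zero this
  · -- P2
    intro u hu v hv hvO huv h1 h2
    have hvnZ : ¬ (v ∉ I ∧ v ∉ O ∧ x v = 0) := fun hcontra => h2 ((hlamZ v).mpr hcontra)
    by_cases huZ : u ∉ I ∧ u ∉ O ∧ x u = 0
    · exact ⟨huZ, hvnZ⟩
    · exfalso
      have hcf' := hcfeq ⟨u, hu⟩ huZ
      have hcasev : v ∈ I ∨ x v = 1 := by
        by_cases hvI : v ∈ I
        · exact Or.inl hvI
        · right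
          rcases zmod2_cases (x v) with h0 | h1
          · exact absurd ⟨hvI, hvO, h0⟩ hvnZ
          · exact h1
      have := hE2 ⟨u, hu⟩ v hvO hcasev
      rw [hcf', if_neg (fun hh => huv hh.symm)] at this
      rw [← oddv_eq_one (G := G)] at hv
      rw [hv] at this
      exact zmod2_one_ne_zero this
  · -- P3
    intro u hu v hvO hnp huv hY
    exact absurd hY (hlamnotY v)
  · -- P4
    intro u hu hXY
    exact absurd hXY (hlamnotP u).1
  · -- P5
    intro u hu hXZ
    exact absurd hXZ (hlamnotP u).2.1
  · -- P6
    intro u hu hYZ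
    exact absurd hYZ (hlamnotP u).2.2
  · -- P7
    intro u hu hX
    rw [hlamX] at hX
    have hcf' := hcfeq ⟨u, hu⟩ hX
    have hcaseu : u ∈ I ∨ x u = 1 := by
      by_cases huI : u ∈ I
      · exact Or.inl huI
      · right
        rcases zmod2_cases (x u) with h0 | h1
        · exact absurd ⟨huI, hu, h0⟩ hX
        · exact h1
    have := hE2 ⟨u, hu⟩ u hu hcaseu
    rw [hcf', if_pos rfl] at this
    rw [← oddv_eq_one (G := G)]
    exact this
  · -- P8
    intro u hu hZ
    rw [hlamZ] at hZ
    have := hE1 ⟨u, hu⟩ u hZ.1 hZ.2.1 hZ.2.2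
    rw [if_pos rfl] at this
    exact chi_eq_one.mp this
  · -- P9
    intro u hu hY
    exact absurd hY (hlamnotY u)

end FlowAux

open FlowAux in
/-- An open graph with `I ∩ O = ∅` admits a measurement labelling with Pauli
flow iff some {0,1}-valuation of the variables makes the variable flow matrix
right-invertible over F₂. -/
theorem flowSearch_iff_maxRank (G : SimpleGraph V) [DecidableRel G.Adj]
    (I O : Finset V) (hIO : I ∩ O = ∅) :
    (∃ lam : V → MLabel,
      (∀ v ∈ I, lam v = MLabel.X ∨ lam v = MLabel.XY ∨ lam v = MLabel.Y) ∧
      ∃ (c : V → Finset V) (prec : V → V → Prop), PauliFlow G I O lam c prec) ↔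
    (∃ x y : V → ZMod 2,
      ∃ N : Matrix {v : V // v ∉ I} {v : V // v ∉ O} (ZMod 2),
        varFlowMat G I O x y * N = 1) := by

  constructor
  · rintro ⟨lam, hI, c, prec, hpf⟩
    have hpf₁ := plred_flow hpf
    have hlab : ∀ v, v ∉ O → plred (lam v) = MLabel.X ∨ plred (lam v) = MLabel.Y ∨
        plred (lam v) = MLabel.Z := fun v _ => plred_cases (lam v)
    obtain ⟨c₁, hff⟩ := exists_FF_of_flow hpf₁ hlab
    obtain ⟨lam₂, c₂, hff₂, hnoY⟩ := yelim
      ((Finset.univ.filter (fun w => w ∉ O ∧ plred (lam w) = MLabel.Y)).card)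
      (fun w => plred (lam w)) c₁ hff (le_refl _)
    obtain ⟨x, y, N, hN⟩ := matrix_of_FF hff₂ (FF_labels hff₂ hnoY)
    exact ⟨x, y, N, hN⟩
  · rintro ⟨x, y, N, h⟩
    obtain ⟨N₂, h₂⟩ := pure_valuation h
    exact flow_of_matrix h₂
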